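/- arXiv:1403.0250 — 3 statements merged into one kernel-verified Lean document; each statement's English description precedes it below -/
import Mathlib

section
/- Let α, α′ and d be integers with d ≥ 0 and 1 ≤ α′ ≤ α, and fix positive integers r_0 = 1, r_1, …, r_{d+1} with r_{e−1} dividing r_e for each e. Then, as functions on {0,1}^α × {0,1}^α, ξ_d refines the function (v,w) ↦ ξ_d(π_{α′}(v), π_{α′}(w)). -/
/-!
Coloring machinery of Conlon–Fox–Lee–Sudakov. Vectors in `{0,1}^α` are modelled as
`Bool` lists of length `α`. Fix block lengths `r 0 = 1, r 1, …` with `r d ∣ r (d+1)`.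
-/

/-- The blocks of resolution with block length `r`: split a vector into consecutive
blocks of length `r` (the last block may be shorter). -/
def blocksOf (r : ℕ) (v : List Bool) : List (List Bool) := v.toChunks r

/-- The function `η_d` (with `r = r_d`): records the position `i` of the first pair of
differing blocks of resolution `d` together with the unordered pair `{v_i, w_i}` of
these blocks; it takes the value `none` (playing the role of `0`) when `v = w`. -/
def eta (r : ℕ) (v w : List Bool) : Option (ℕ × Sym2 (List Bool)) :=
  ((((blocksOf r v).zip (blocksOf r w)).zipIdx.map Prod.swap).find? (fun q => q.2.1 != q.2.2)).map
    (fun q => (q.1, s(q.2.1, q.2.2)))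

/-- The function `ξ_d`: apply `η_d` to each corresponding pair of blocks of
resolution `d+1`. -/
def xi (r : ℕ → ℕ) (d : ℕ) (v w : List Bool) : List (Option (ℕ × Sym2 (List Bool))) :=
  ((blocksOf (r (d+1)) v).zip (blocksOf (r (d+1)) w)).map fun q => eta (r d) q.1 q.2

/-- The type of colors used by the coloring `c_p`. -/
abbrev EGColor := List (List (Option (ℕ × Sym2 (List Bool))))

instance : DecidableEq (List (Option (ℕ × Sym2 (List Bool)))) := instDecidableEqList
instance : DecidableEq EGColor := instDecidableEqList

/-- The coloring `c_p (v,w) = (ξ_p(v,w), ξ_{p-1}(v,w), …, ξ_0(v,w))`. -/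
def cColor (r : ℕ → ℕ) (p : ℕ) (v w : List Bool) : EGColor :=
  (List.range (p+1)).map fun j => xi r (p - j) v w

/-- The set of colors appearing under `c_p` on (unordered) pairs of distinct
elements of `S`. -/
def colorsOn (r : ℕ → ℕ) (p : ℕ) (S : Finset (List Bool)) : Finset EGColor :=
  ((S ×ˢ S).filter fun q => q.1 ≠ q.2).image fun q => cColor r p q.1 q.2

/-- The vertex set `{0,1}^α`, realized as the set of all `Bool` lists of length `α`. -/
def allVecs (α : ℕ) : Finset (List Bool) :=
  Finset.univ.image fun v : Fin α → Bool => List.ofFn v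

/-- `alphaD rd α`: the largest multiple of `rd` that is strictly less than `α`
(for `α, rd ≥ 1`). -/
def alphaD (rd α : ℕ) : ℕ := rd * ((α - 1) / rd)

/-- The set `C_E^{(d)}` of emerging colors of `S` at resolution `d`: the unordered pairs
`{v'', w''}` of final segments of elements `v = (v', v'')`, `w = (w', w'')` of `S`
(split at `α_d`) with `v' = w'` and `v'' ≠ w''`. -/
def CEset (r : ℕ → ℕ) (α : ℕ) (S : Finset (List Bool)) (d : ℕ) : Finset (Sym2 (List Bool)) :=
  ((S ×ˢ S).filter fun q =>
      q.1.take (alphaD (r d) α) = q.2.take (alphaD (r d) α) ∧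
      q.1.drop (alphaD (r d) α) ≠ q.2.drop (alphaD (r d) α)).image
    fun q => s(q.1.drop (alphaD (r d) α), q.2.drop (alphaD (r d) α))

/-- The set `C_I^{(d)}` of inherited colors of `S` at resolution `d`: the pairs
`(c_p(v', w'), η_{d-1}(v'', w''))` over elements `v = (v', v'')`, `w = (w', w'')` of `S`
(split at `α_d`) with `v' ≠ w'`. -/
def CIset (r : ℕ → ℕ) (p α : ℕ) (S : Finset (List Bool)) (d : ℕ) :
    Finset (EGColor × Option (ℕ × Sym2 (List Bool))) :=
  ((S ×ˢ S).filter fun q =>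
      q.1.take (alphaD (r d) α) ≠ q.2.take (alphaD (r d) α)).image
    fun q => (cColor r p (q.1.take (alphaD (r d) α)) (q.2.take (alphaD (r d) α)),
              eta (r (d-1)) (q.1.drop (alphaD (r d) α)) (q.2.drop (alphaD (r d) α)))

section Aux

variable {γ : Type*}

private theorem toChunks_go_spec (n : ℕ) :
    ∀ (xs : List γ) (acc₁ : Array γ) (acc₂ : Array (List γ)),
      0 < acc₁.size → acc₁.size ≤ n →
      List.toChunks.go n xs acc₁ acc₂ =
        acc₂.toList ++ (acc₁.toList ++ xs.take (n - acc₁.size)) ::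
          List.toChunks n (xs.drop (n - acc₁.size)) := by
  intro xs
  induction xs with
  | nil =>
    intro acc₁ acc₂ h1 h2
    simp [List.toChunks.go, List.toChunks]
  | cons x xs ih =>
    intro acc₁ acc₂ h1 h2
    by_cases hsz : acc₁.size = n
    · have hne : n ≠ 0 := by omega
      rw [List.toChunks.go, if_pos (by simpa using hsz)]
      rw [ih ((Array.mkEmpty n).push x) (acc₂.push acc₁.toList) (by simp) (by simp; omega)]
      have hchunk : List.toChunks n (x :: xs) =
          (x :: xs.take (n - 1)) :: List.toChunks n (xs.drop (n - 1)) := by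
        obtain ⟨m, rfl⟩ : ∃ m, n = m + 1 := ⟨n - 1, by omega⟩
        show List.toChunks.go (m+1) xs #[x] #[] = _
        rw [ih #[x] #[] (by simp) (by simp)]
        simp
      simp [hsz, hchunk]
    · have hsz' : acc₁.size < n := lt_of_le_of_ne h2 hsz
      rw [List.toChunks.go, if_neg (by simpa using hsz)]
      rw [ih (acc₁.push x) acc₂ (by simp) (by simp; omega)]
      have h3 : n - acc₁.size = (n - (acc₁.size + 1)) + 1 := by omega
      simp [h3]

theorem toChunks_cons' (n : ℕ) (hn : 0 < n) (l : List γ) (hl : l ≠ []) :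
    List.toChunks n l = l.take n :: List.toChunks n (l.drop n) := by
  obtain ⟨x, xs, rfl⟩ := List.exists_cons_of_ne_nil hl
  obtain ⟨m, rfl⟩ : ∃ m, n = m + 1 := ⟨n - 1, by omega⟩
  show List.toChunks.go (m+1) xs #[x] #[] = _
  rw [toChunks_go_spec (m+1) xs #[x] #[] (by simp) (by simp)]
  simp

private theorem find?_enumFrom_shift :
    ∀ (l : List (List Bool × List Bool)) (m k : ℕ),
      (((List.zipIdx l (m + k)).map Prod.swap).find? fun q => q.2.1 != q.2.2) =
        (((List.zipIdx l m).map Prod.swap).find? fun q => q.2.1 != q.2.2).map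
          fun q => (q.1 + k, q.2) := by
  intro l
  induction l with
  | nil => intro m k; rfl
  | cons a l ih =>
    intro m k
    rw [List.zipIdx_cons, List.zipIdx_cons, List.map_cons, List.map_cons, List.find?_cons,
      List.find?_cons]
    cases hpa : (a.1 != a.2) with
    | true => simp [hpa]
    | false =>
      simp only [Prod.swap_prod_mk, hpa]
      have : m + k + 1 = (m + 1) + k := by omega
      rw [this, ih]

end Aux

theorem eta_nil (s : ℕ) (w : List Bool) : eta s [] w = none := by
  unfold eta blocksOf
  simp [List.toChunks]

theorem eta_nil_right (s : ℕ) (v : List Bool) : eta s v [] = none := by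
  unfold eta blocksOf
  rw [show List.toChunks s ([] : List Bool) = [] from by cases s <;> rfl,
    List.zip_nil_right]
  rfl

theorem eta_cons (s : ℕ) (hs : 0 < s) (b b' : List Bool) (hb : b ≠ []) (hb' : b' ≠ []) :
    eta s b b' =
      if b.take s = b'.take s then
        (eta s (b.drop s) (b'.drop s)).map fun q => (q.1 + 1, q.2)
      else some (0, s(b.take s, b'.take s)) := by
  unfold eta blocksOf
  rw [toChunks_cons' s hs b hb, toChunks_cons' s hs b' hb']
  rw [List.zip_cons_cons, List.zipIdx_cons, List.map_cons, List.find?_cons]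
  by_cases h : b.take s = b'.take s
  · rw [if_pos h]
    have : ((b.take s, b'.take s).1 != (b.take s, b'.take s).2) = false := by
      simp [h]
    simp only [Prod.swap_prod_mk, this]
    show (List.find? _ (List.map Prod.swap (List.zipIdx _ (0 + 1)))).map _ = _
    rw [find?_enumFrom_shift]
    show Option.map _ (Option.map _ (List.find? _ (List.map Prod.swap (List.zipIdx _ 0)))) = _
    rw [Option.map_map, Option.map_map]
    rfl
  · rw [if_neg h]
    have : ((b.take s, b'.take s).1 != (b.take s, b'.take s).2) = true := by
      simp [h]
    simp only [Prod.swap_prod_mk, this]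
    rfl

/-- How `eta` transforms under truncation of both arguments. -/
def Ft (s t : ℕ) : Option (ℕ × Sym2 (List Bool)) → Option (ℕ × Sym2 (List Bool))
  | none => none
  | some (j, pq) =>
    if t ≤ j * s then none
    else if (j + 1) * s ≤ t then some (j, pq)
    else if (pq.map (List.take (t - j * s))).IsDiag then none
    else some (j, pq.map (List.take (t - j * s)))

theorem eta_take (s : ℕ) (hs : 0 < s) :
    ∀ (n : ℕ) (b b' : List Bool), b.length ≤ n → b.length = b'.length → ∀ t,
      eta s (b.take t) (b'.take t) = Ft s t (eta s b b') := by
  intro n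
  induction n with
  | zero =>
    intro b b' hn hlen t
    have hb : b = [] := List.eq_nil_of_length_eq_zero (by omega)
    subst hb
    simp only [List.take_nil, eta_nil]
    rfl
  | succ n ih =>
    intro b b' hn hlen t
    rcases eq_or_ne b [] with rfl | hb
    · have hb' : b' = [] := List.eq_nil_of_length_eq_zero (by simpa using hlen.symm)
      subst hb'
      simp only [List.take_nil, eta_nil]
      rfl
    have hb' : b' ≠ [] := by
      intro hh; subst hh
      exact hb (List.eq_nil_of_length_eq_zero (by simpa using hlen))
    rcases Nat.eq_zero_or_pos t with rfl | ht
    · simp only [List.take_zero, eta_nil]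
      rcases h : eta s b b' with _ | ⟨j, pq⟩
      · rfl
      · simp [Ft]
    have hbt : b.take t ≠ [] := by
      rw [Ne, List.take_eq_nil_iff]; push_neg; exact ⟨by omega, hb⟩
    have hbt' : b'.take t ≠ [] := by
      rw [Ne, List.take_eq_nil_iff]; push_neg; exact ⟨by omega, hb'⟩
    rw [eta_cons s hs (b.take t) (b'.take t) hbt hbt', eta_cons s hs b b' hb hb']
    rw [List.take_take, List.take_take]
    by_cases hts : s ≤ t
    · have hmin : s ⊓ t = s := min_eq_left hts
      rw [hmin]
      by_cases heq : b.take s = b'.take s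
      · rw [if_pos heq, if_pos heq]
        rw [List.drop_take, List.drop_take]
        rw [ih (b.drop s) (b'.drop s) (by simp; omega) (by simp; omega) (t - s)]
        -- key commutation of Ft with the index shift
        rcases h : eta s (b.drop s) (b'.drop s) with _ | ⟨j, pq⟩
        · rfl
        · simp only [Option.map_some, Ft]
          have e1 : (j + 1) * s = j * s + s := by ring
          have e2 : (j + 1 + 1) * s = j * s + s + s := by ring
          rw [e1, e2]
          have e3 : t - (j * s + s) = t - s - j * s := by omega
          rw [e3]
          by_cases h1 : t - s ≤ j * s
          · rw [if_pos h1, if_pos (show t ≤ j * s + s by omega)]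
            rfl
          · rw [if_neg h1, if_neg (show ¬ t ≤ j * s + s by omega)]
            by_cases h2 : j * s + s ≤ t - s
            · rw [if_pos h2, if_pos (show j * s + s + s ≤ t by omega)]
              rfl
            · rw [if_neg h2, if_neg (show ¬ j * s + s + s ≤ t by omega)]
              by_cases h3 : (Sym2.map (List.take (t - s - j * s)) pq).IsDiag
              · rw [if_pos h3, if_pos h3]
                rfl
              · rw [if_neg h3, if_neg h3]
                rfl
      · rw [if_neg heq, if_neg heq]
        simp only [Ft]
        rw [if_neg (by simp; omega), if_pos (by simpa using hts)]
    · have hmin : s ⊓ t = t := min_eq_right (le_of_not_ge hts)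
      rw [hmin]
      have hdrop : (b.take t).drop s = [] :=
        List.drop_eq_nil_of_le
          (le_trans (by rw [List.length_take]; exact min_le_left _ _) (le_of_not_ge hts))
      have hdrop' : (b'.take t).drop s = [] :=
        List.drop_eq_nil_of_le
          (le_trans (by rw [List.length_take]; exact min_le_left _ _) (le_of_not_ge hts))
      by_cases heq : b.take s = b'.take s
      · have heqt : b.take t = b'.take t := by
          have : (b.take s).take t = (b'.take s).take t := by rw [heq]
          rwa [List.take_take, List.take_take, min_eq_left (le_of_not_ge hts)] at this
        rw [if_pos heqt, if_pos heq, hdrop, hdrop', eta_nil]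
        rcases h : eta s (b.drop s) (b'.drop s) with _ | ⟨j, pq⟩
        · rfl
        · simp only [Option.map_some, Option.map_none, Ft]
          rw [if_pos]
          calc t ≤ s := le_of_not_ge hts
            _ ≤ (j+1) * s := Nat.le_mul_of_pos_left s (by omega)
      · rw [if_neg heq]
        simp only [Ft]
        rw [if_neg (show ¬ (t ≤ 0 * s) by simp; omega),
          if_neg (show ¬ ((0 + 1) * s ≤ t) by simpa using hts)]
        have hpair : (s(b.take s, b'.take s)).map (List.take (t - 0 * s)) =
            s(b.take t, b'.take t) := by
          rw [Sym2.map_pair_eq]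
          simp only [Nat.zero_mul, Nat.sub_zero]
          rw [List.take_take, List.take_take, min_eq_left (le_of_not_ge hts)]
        rw [hpair]
        by_cases heqt : b.take t = b'.take t
        · rw [if_pos heqt, if_pos (by rw [Sym2.mk_isDiag_iff]; exact heqt), hdrop, hdrop',
            eta_nil]
          rfl
        · rw [if_neg heqt, if_neg (by rw [Sym2.mk_isDiag_iff]; exact heqt)]

theorem eta_refine (s : ℕ) (hs : 0 < s) (b b' c c' : List Bool)
    (hb : b.length = b'.length) (hc : c.length = c'.length)
    (h : eta s b b' = eta s c c') (t : ℕ) :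
    eta s (b.take t) (b'.take t) = eta s (c.take t) (c'.take t) := by
  rw [eta_take s hs b.length b b' le_rfl hb t, eta_take s hs c.length c c' le_rfl hc t, h]

theorem xi_nil (r : ℕ → ℕ) (d : ℕ) (w : List Bool) : xi r d [] w = [] := by
  unfold xi blocksOf
  rw [show List.toChunks (r (d+1)) ([] : List Bool) = [] from by cases r (d+1) <;> rfl]
  rfl

theorem xi_cons (r : ℕ → ℕ) (d : ℕ) (hR : 0 < r (d+1)) (v w : List Bool)
    (hv : v ≠ []) (hw : w ≠ []) :
    xi r d v w =
      eta (r d) (v.take (r (d+1))) (w.take (r (d+1))) ::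
        xi r d (v.drop (r (d+1))) (w.drop (r (d+1))) := by
  unfold xi blocksOf
  rw [toChunks_cons' _ hR v hv, toChunks_cons' _ hR w hw, List.zip_cons_cons, List.map_cons]

theorem xi_refine (r : ℕ → ℕ) (d : ℕ) (hs : 0 < r d) (hR : 0 < r (d+1)) :
    ∀ (n : ℕ) (v w x y : List Bool), v.length ≤ n →
      v.length = w.length → x.length = y.length →
      xi r d v w = xi r d x y → ∀ t,
      xi r d (v.take t) (w.take t) = xi r d (x.take t) (y.take t) := by
  intro n
  induction n with
  | zero =>
    intro v w x y hn hvw hxy h t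
    have hv : v = [] := List.eq_nil_of_length_eq_zero (by omega)
    subst hv
    have hw : w = [] := List.eq_nil_of_length_eq_zero (by simpa using hvw.symm)
    subst hw
    rcases eq_or_ne x [] with rfl | hx
    · have hy : y = [] := List.eq_nil_of_length_eq_zero (by simpa using hxy.symm)
      subst hy; rfl
    · exfalso
      have hy : y ≠ [] := by
        intro hh; subst hh
        exact hx (List.eq_nil_of_length_eq_zero (by simpa using hxy))
      rw [xi_nil, xi_cons r d hR x y hx hy] at h
      simp at h
  | succ n ih =>
    intro v w x y hn hvw hxy h t
    rcases eq_or_ne v [] with rfl | hv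
    · have hw : w = [] := List.eq_nil_of_length_eq_zero (by simpa using hvw.symm)
      subst hw
      rcases eq_or_ne x [] with rfl | hx
      · have hy : y = [] := List.eq_nil_of_length_eq_zero (by simpa using hxy.symm)
        subst hy; rfl
      · exfalso
        have hy : y ≠ [] := by
          intro hh; subst hh
          exact hx (List.eq_nil_of_length_eq_zero (by simpa using hxy))
        rw [xi_nil, xi_cons r d hR x y hx hy] at h
        simp at h
    have hw : w ≠ [] := by
      intro hh; subst hh
      exact hv (List.eq_nil_of_length_eq_zero (by simpa using hvw))
    have hx : x ≠ [] := by
      intro hh; subst hh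
      rw [xi_nil, xi_cons r d hR v w hv hw] at h
      simp at h
    have hy : y ≠ [] := by
      intro hh; subst hh
      exact hx (List.eq_nil_of_length_eq_zero (by simpa using hxy))
    rw [xi_cons r d hR v w hv hw, xi_cons r d hR x y hx hy] at h
    obtain ⟨hH, hT⟩ := List.cons.injEq _ _ _ _ ▸ h
    rcases Nat.eq_zero_or_pos t with rfl | ht
    · simp only [List.take_zero]
    have hvt : v.take t ≠ [] := by
      rw [Ne, List.take_eq_nil_iff]; push_neg; exact ⟨by omega, hv⟩
    have hwt : w.take t ≠ [] := by
      rw [Ne, List.take_eq_nil_iff]; push_neg; exact ⟨by omega, hw⟩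
    have hxt : x.take t ≠ [] := by
      rw [Ne, List.take_eq_nil_iff]; push_neg; exact ⟨by omega, hx⟩
    have hyt : y.take t ≠ [] := by
      rw [Ne, List.take_eq_nil_iff]; push_neg; exact ⟨by omega, hy⟩
    rw [xi_cons r d hR _ _ hvt hwt, xi_cons r d hR _ _ hxt hyt]
    congr 1
    · -- heads
      have e : ∀ l : List Bool, (l.take t).take (r (d+1)) = (l.take (r (d+1))).take t := by
        intro l; rw [List.take_take, List.take_take, min_comm]
      rw [e v, e w, e x, e y]
      exact eta_refine (r d) hs _ _ _ _
        (by rw [List.length_take, List.length_take, hvw])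
        (by rw [List.length_take, List.length_take, hxy]) hH t
    · -- tails
      have e : ∀ l : List Bool, (l.take t).drop (r (d+1)) =
          (l.drop (r (d+1))).take (t - r (d+1)) := by
        intro l; rw [List.drop_take]
      rw [e v, e w, e x, e y]
      exact ih (v.drop (r (d+1))) (w.drop (r (d+1))) (x.drop (r (d+1))) (y.drop (r (d+1)))
        (by have := List.length_pos_iff.2 hv; simp; omega)
        (by simp [hvw]) (by simp [hxy]) hT (t - r (d+1))

/-- **Lemma 4.2(ii).** For `d ≥ 0` and `1 ≤ α' ≤ α`, the function `ξ_d` refines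
`(v, w) ↦ ξ_d(π_{α'}(v), π_{α'}(w))` on `{0,1}^α × {0,1}^α`. -/
theorem stmt6 (α α' d : ℕ) (hα' : 1 ≤ α') (hα : α' ≤ α) (r : ℕ → ℕ) (hr0 : r 0 = 1)
    (hrpos : ∀ e, 0 < r e) (hrdvd : ∀ e, r e ∣ r (e + 1))
    (v w x y : List Bool) (hv : v.length = α) (hw : w.length = α)
    (hx : x.length = α) (hy : y.length = α)
    (h : xi r d v w = xi r d x y) :
    xi r d (v.take α') (w.take α') = xi r d (x.take α') (y.take α') :=
  xi_refine r d (hrpos d) (hrpos (d+1)) v.length v w x y le_rfl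
    (by rw [hv, hw]) (by rw [hx, hy]) h α'
end

section
/- Let d, p and α be positive integers with 1 ≤ d ≤ p+1, fix parameters r_0 = 1, r_1, …, r_{p+1} with r_{e−1} dividing r_e for each e, and let α′ be the largest multiple of r_d that is strictly less than α. Define γ_d on {0,1}^α × {0,1}^α by γ_d(v,w) = (c_p(v′,w′), η_{d−1}(v″,w″)), where v = (v′,v″) and w = (w′,w″) with v′,w′ ∈ {0,1}^{α′} and v″,w″ ∈ {0,1}^{α−α′}. Then c_p, as a function on {0,1}^α × {0,1}^α, refines γ_d. -/
/-! ### Auxiliary chunking theory -/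

namespace CFLSAux

/-- A simple recursive chunking function, equal to `List.toChunks bs` for `bs ≥ 1`. -/
def chunks {α : Type*} (bs : ℕ) : List α → List (List α)
  | [] => []
  | a :: l => (a :: l.take (bs - 1)) :: chunks bs (l.drop (bs - 1))
termination_by l => l.length
decreasing_by simp only [List.length_drop, List.length_cons]; omega

@[simp] lemma chunks_nil {α : Type*} (bs : ℕ) : chunks bs ([] : List α) = [] := by
  rw [chunks]

lemma chunks_cons {α : Type*} (bs : ℕ) (a : α) (l : List α) :
    chunks bs (a :: l) = (a :: l.take (bs - 1)) :: chunks bs (l.drop (bs - 1)) := by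
  rw [chunks]

lemma chunks_eq_cons {α : Type*} {bs : ℕ} (hbs : 1 ≤ bs) {l : List α} (hl : l ≠ []) :
    chunks bs l = l.take bs :: chunks bs (l.drop bs) := by
  obtain ⟨a, l, rfl⟩ := List.exists_cons_of_ne_nil hl
  obtain ⟨k, rfl⟩ : ∃ k, bs = k + 1 := ⟨bs - 1, by omega⟩
  rw [chunks_cons]
  simp

lemma toChunksGo_spec {α : Type*} (m : ℕ) (hm : 1 ≤ m) (l : List α) :
    ∀ (acc1 : List α) (acc2 : List (List α)), 1 ≤ acc1.length → acc1.length ≤ m →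
    List.toChunks.go m l acc1.toArray acc2.toArray =
      acc2 ++ (acc1 ++ l.take (m - acc1.length)) :: chunks m (l.drop (m - acc1.length)) := by
  induction l with
  | nil =>
    intro acc1 acc2 h1 h2
    rw [List.toChunks.go]
    simp
  | cons x xs ih =>
    intro acc1 acc2 h1 h2
    rw [List.toChunks.go]
    by_cases h : acc1.length = m
    · rw [if_pos (by simpa using h)]
      have e1 : (Array.mkEmpty m).push x = ([x] : List α).toArray := by
        apply Array.ext'
        simp
      have e2 : acc2.toArray.push acc1.toArray.toList = (acc2 ++ [acc1]).toArray := by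
        apply Array.ext'
        simp
      rw [e1, e2, ih [x] (acc2 ++ [acc1]) (by simp) (by simpa using hm)]
      have e3 : m - acc1.length = 0 := by omega
      rw [e3]
      simp only [List.take_zero, List.drop_zero, List.append_nil, List.append_assoc,
        List.singleton_append, List.length_singleton]
      rw [chunks_cons]
    · rw [if_neg (by simpa using h)]
      have e1 : acc1.toArray.push x = (acc1 ++ [x]).toArray := by
        apply Array.ext'
        simp
      rw [e1, ih (acc1 ++ [x]) acc2 (by simp) (by simp; omega)]
      obtain ⟨t, ht⟩ : ∃ t, m - acc1.length = t + 1 := ⟨m - acc1.length - 1, by omega⟩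
      have ht' : m - (acc1 ++ [x]).length = t := by simp; omega
      rw [ht, ht']
      simp [List.take_succ_cons, List.drop_succ_cons]

lemma toChunks_eq_chunks {α : Type*} {bs : ℕ} (hbs : 1 ≤ bs) (l : List α) :
    l.toChunks bs = chunks bs l := by
  obtain ⟨k, rfl⟩ : ∃ k, bs = k + 1 := ⟨bs - 1, by omega⟩
  cases l with
  | nil => rw [List.toChunks, chunks_nil]
  | cons x xs =>
    have : (x :: xs).toChunks (k + 1) = List.toChunks.go (k + 1) xs #[x] #[] := rfl
    rw [this]
    have e1 : (#[x] : Array α) = ([x] : List α).toArray := rfl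
    have e2 : (#[] : Array (List α)) = ([] : List (List α)).toArray := rfl
    rw [e1, e2, toChunksGo_spec (k + 1) (by omega) xs [x] [] (by simp) (by simp)]
    rw [chunks_cons]
    simp

lemma chunks_length_eq {α β : Type*} (bs : ℕ) : ∀ (n : ℕ) (l : List α) (l' : List β),
    l.length = n → l'.length = n → (chunks bs l).length = (chunks bs l').length := by
  intro n
  induction n using Nat.strong_induction_on with
  | _ n ih =>
    intro l l' hl hl'
    match l, l' with
    | [], [] => simp
    | [], b :: l' => simp at hl hl'; omega
    | a :: l, [] => simp at hl hl'; omega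
    | a :: l, b :: l' =>
      simp only [List.length_cons] at hl hl'
      rw [chunks_cons, chunks_cons]
      simp only [List.length_cons]
      congr 1
      exact ih (n - 1 - (bs - 1)) (by omega) _ _ (by simp; omega) (by simp; omega)

lemma chunks_append {α : Type*} {bs : ℕ} (hbs : 1 ≤ bs) :
    ∀ (k : ℕ) (l₁ l₂ : List α), l₁.length = bs * k →
    chunks bs (l₁ ++ l₂) = chunks bs l₁ ++ chunks bs l₂ := by
  intro k
  induction k with
  | zero =>
    intro l₁ l₂ h
    have : l₁ = [] := List.eq_nil_of_length_eq_zero (by omega)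
    subst this; simp
  | succ k ih =>
    intro l₁ l₂ h
    have hL : bs ≤ l₁.length := by rw [h]; nlinarith
    have h1 : l₁ ≠ [] := by intro hc; subst hc; simp at h; omega
    have h2 : l₁ ++ l₂ ≠ [] := by simp [h1]
    rw [chunks_eq_cons hbs h2, chunks_eq_cons hbs h1]
    rw [List.take_append_of_le_length hL, List.drop_append_of_le_length hL]
    rw [ih (l₁.drop bs) l₂ (by simp [h]; ring_nf; omega)]
    simp

lemma chunks_take {α : Type*} {bs : ℕ} (hbs : 1 ≤ bs) :
    ∀ (k : ℕ) (l : List α), chunks bs (l.take (bs * k)) = (chunks bs l).take k := by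
  intro k
  induction k with
  | zero => simp
  | succ k ih =>
    intro l
    cases l with
    | nil => simp
    | cons a l =>
      have hne : (a :: l).take (bs * (k + 1)) ≠ [] := by
        have : 0 < bs * (k + 1) := by positivity
        simp [List.take_eq_nil_iff]
        omega
      rw [chunks_eq_cons hbs hne, chunks_eq_cons hbs (List.cons_ne_nil a l)]
      rw [List.take_take, List.drop_take]
      have e1 : bs ⊓ (bs * (k + 1)) = bs := by
        rw [min_eq_left]; nlinarith
      have e2 : bs * (k + 1) - bs = bs * k := by ring_nf; omega
      rw [e1, e2, ih]
      simp

lemma chunks_drop {α : Type*} {bs : ℕ} (hbs : 1 ≤ bs) :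
    ∀ (k : ℕ) (l : List α), chunks bs (l.drop (bs * k)) = (chunks bs l).drop k := by
  intro k
  induction k with
  | zero => simp
  | succ k ih =>
    intro l
    cases l with
    | nil => simp
    | cons a l =>
      have e : List.drop (bs * (k + 1)) (a :: l) = List.drop (bs * k) (List.drop bs (a :: l)) := by
        rw [List.drop_drop]; congr 1; ring
      rw [chunks_eq_cons hbs (List.cons_ne_nil a l), List.drop_succ_cons, e, ih]

lemma chunks_singleton {α : Type*} {bs : ℕ} {l : List α} (h1 : l ≠ [])
    (h2 : l.length ≤ bs) : chunks bs l = [l] := by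
  have hbs : 1 ≤ bs := le_trans (by simpa [Nat.one_le_iff_ne_zero, List.length_eq_zero_iff] using h1) h2
  rw [chunks_eq_cons hbs h1, List.take_of_length_le h2, List.drop_eq_nil_of_le h2]
  simp

lemma find?_enumFrom_ne {A : Type*} [BEq A] (L : List (A × A)) :
    ∀ n : ℕ, ((L.zipIdx n).map Prod.swap).find? (fun q => q.2.1 != q.2.2) =
      (((L.zipIdx 0).map Prod.swap).find? (fun q => q.2.1 != q.2.2)).map (fun q => (q.1 + n, q.2)) := by
  induction L with
  | nil => intro n; simp
  | cons a L ih =>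
    intro n
    rw [List.zipIdx_cons, List.zipIdx_cons, List.map_cons, List.map_cons]
    by_cases h : (a.1 != a.2) = true
    · rw [List.find?_cons_of_pos (by simpa using h), List.find?_cons_of_pos (by simpa using h)]
      simp
    · rw [List.find?_cons_of_neg (by simpa using h), List.find?_cons_of_neg (by simpa using h)]
      rw [ih (n + 1), ih (0 + 1), Option.map_map]
      congr 1
      funext q
      simp [Prod.ext_iff]
      omega

lemma eta_nil_left (r : ℕ) (w : List Bool) : eta r [] w = none := by
  have h : List.toChunks r ([] : List Bool) = [] := by rw [List.toChunks]
  simp [eta, blocksOf, h]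

lemma eta_nil_right (r : ℕ) (v : List Bool) : eta r v [] = none := by
  have h : List.toChunks r ([] : List Bool) = [] := by rw [List.toChunks]
  simp [eta, blocksOf, h]

lemma eta_cons {r : ℕ} (hr : 1 ≤ r) {v w : List Bool} (hv : v ≠ []) (hw : w ≠ []) :
    eta r v w = if v.take r = w.take r
      then (eta r (v.drop r) (w.drop r)).map (fun x => (x.1 + 1, x.2))
      else some (0, s(v.take r, w.take r)) := by
  unfold eta blocksOf
  rw [toChunks_eq_chunks hr v, toChunks_eq_chunks hr w, toChunks_eq_chunks hr (v.drop r),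
    toChunks_eq_chunks hr (w.drop r), chunks_eq_cons hr hv, chunks_eq_cons hr hw,
    List.zip_cons_cons]
  rw [show ∀ (z : List (List Bool × List Bool)) (q : List Bool × List Bool),
      (q :: z).zipIdx.map Prod.swap = (0, q) :: (z.zipIdx 1).map Prod.swap from
      fun z q => by rw [List.zipIdx_cons, List.map_cons]; rfl]
  by_cases h : v.take r = w.take r
  · rw [if_pos h, List.find?_cons_of_neg (by simp [h]), find?_enumFrom_ne _ 1]
    rw [Option.map_map, Option.map_map]
    rfl
  · rw [if_neg h, List.find?_cons_of_pos (by simp [bne_iff_ne]; exact h)]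
    rfl

lemma eta_eq_none_iff {r : ℕ} (hr : 1 ≤ r) : ∀ (n : ℕ) (v w : List Bool),
    v.length = n → w.length = n → (eta r v w = none ↔ v = w) := by
  intro n
  induction n using Nat.strong_induction_on with
  | _ n ih =>
    intro v w hv hw
    match v, w with
    | [], [] => simp [eta_nil_left]
    | [], b :: w => simp at hv hw; omega
    | a :: v, [] => simp at hv hw; omega
    | a :: v0, b :: w0 =>
      rw [eta_cons hr (List.cons_ne_nil a v0) (List.cons_ne_nil b w0)]
      by_cases h : (a :: v0).take r = (b :: w0).take r
      · rw [if_pos h, Option.map_eq_none_iff]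
        have hlen : n - r < n := by simp only [List.length_cons] at hv; omega
        rw [ih (n - r) hlen _ _ (by simp only [List.length_drop]; omega)
          (by simp only [List.length_drop]; omega)]
        constructor
        · intro hdrop
          rw [← List.take_append_drop r (a :: v0), ← List.take_append_drop r (b :: w0), h, hdrop]
        · intro hvw
          rw [hvw]
      · rw [if_neg h]
        constructor
        · intro hc; simp at hc
        · intro hvw; exact absurd (by rw [hvw]) h

/-- Truncation action on `η`-values: computes `η` on a common prefix of length `s`
from the `η`-value of the full lists. -/
def truncEta (m s : ℕ) : Option (ℕ × Sym2 (List Bool)) → Option (ℕ × Sym2 (List Bool))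
  | none => none
  | some (i, q) =>
    if (i + 1) * m ≤ s then some (i, q)
    else if i * m < s then
      if (q.map (List.take (s - i * m))).IsDiag then none
      else some (i, q.map (List.take (s - i * m)))
    else none

@[simp] lemma truncEta_none (m s : ℕ) : truncEta m s none = none := rfl

lemma truncEta_some (m s i : ℕ) (q : Sym2 (List Bool)) :
    truncEta m s (some (i, q)) =
      if (i + 1) * m ≤ s then some (i, q)
      else if i * m < s then
        if (q.map (List.take (s - i * m))).IsDiag then none
        else some (i, q.map (List.take (s - i * m)))
      else none := rfl

lemma truncEta_shift {m : ℕ} (hm : 1 ≤ m) (s : ℕ) (o : Option (ℕ × Sym2 (List Bool))) :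
    (truncEta m (s - m) o).map (fun x => (x.1 + 1, x.2)) =
      truncEta m s (o.map (fun x => (x.1 + 1, x.2))) := by
  cases o with
  | none => rfl
  | some x =>
    obtain ⟨i, q⟩ := x
    simp only [Option.map_some]
    rw [truncEta_some, truncEta_some]
    have e1 : (i + 1) * m = i * m + m := by ring
    have e2 : (i + 1 + 1) * m = i * m + m + m := by ring
    rw [e1, e2]
    have e3 : s - m - i * m = s - (i * m + m) := by omega
    rw [e3]
    by_cases h1 : i * m + m ≤ s - m
    · have c1 : i * m + m + m ≤ s := by omega
      rw [if_pos h1, if_pos c1]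
      rfl
    · rw [if_neg h1]
      by_cases h2 : i * m < s - m
      · have c1 : ¬ (i * m + m + m ≤ s) := by omega
        have c2 : i * m + m < s := by omega
        rw [if_pos h2, if_neg c1, if_pos c2]
        by_cases h3 : (q.map (List.take (s - (i * m + m)))).IsDiag
        · rw [if_pos h3, if_pos h3]; rfl
        · rw [if_neg h3, if_neg h3]; rfl
      · have c1 : ¬ (i * m + m + m ≤ s) := by omega
        have c2 : ¬ (i * m + m < s) := by omega
        rw [if_neg h2, if_neg c1, if_neg c2]
        rfl

lemma eta_take {r : ℕ} (hr : 1 ≤ r) : ∀ (n : ℕ) (v w : List Bool),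
    v.length = n → w.length = n →
    ∀ s : ℕ, eta r (v.take s) (w.take s) = truncEta r s (eta r v w) := by
  intro n
  induction n using Nat.strong_induction_on with
  | _ n ih =>
    intro v w hv hw s
    match v, w with
    | [], [] => simp [eta_nil_left]
    | [], b :: w => simp at hv hw; omega
    | a :: v, [] => simp at hv hw; omega
    | a :: v0, b :: w0 =>
      have hn : n = v0.length + 1 := by simpa using hv.symm
      rcases Nat.eq_zero_or_pos s with hs | hs
      · subst hs
        simp only [List.take_zero]
        rw [eta_nil_left]
        cases he : eta r (a :: v0) (b :: w0) with
        | none => rfl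
        | some x =>
          obtain ⟨i, q⟩ := x
          rw [truncEta_some]
          have h1 : ¬ ((i + 1) * r ≤ 0) := by
            have : 0 < (i + 1) * r := Nat.mul_pos (by omega) hr
            omega
          rw [if_neg h1, if_neg (by omega)]
      · have hvne : (a :: v0).take s ≠ [] := by
          simp [List.take_eq_nil_iff]; omega
        have hwne : (b :: w0).take s ≠ [] := by
          simp [List.take_eq_nil_iff]; omega
        rw [eta_cons hr hvne hwne, eta_cons hr (List.cons_ne_nil a v0) (List.cons_ne_nil b w0)]
        rw [List.take_take, List.take_take]
        by_cases h : (a :: v0).take r = (b :: w0).take r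
        · have hmin : (a :: v0).take (r ⊓ s) = (b :: w0).take (r ⊓ s) := by
            have h' := congrArg (List.take s) h
            rw [List.take_take, List.take_take] at h'
            rwa [inf_comm]
          rw [if_pos h, if_pos hmin, List.drop_take, List.drop_take]
          rw [ih (n - r) (by omega) (List.drop r (a :: v0)) (List.drop r (b :: w0))
            (by simp only [List.length_drop]; omega) (by simp only [List.length_drop]; omega)
            (s - r)]
          rw [truncEta_shift hr]
        · rw [if_neg h]
          rcases le_or_gt r s with hrs | hrs
          · rw [min_eq_left hrs, if_neg h, truncEta_some,
              if_pos (by rw [show (0 + 1) * r = r by ring]; exact hrs)]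
          · rw [min_eq_right (le_of_lt hrs), truncEta_some]
            rw [show (0 + 1) * r = r by ring, show (0 : ℕ) * r = 0 by ring, Nat.sub_zero]
            have hq : Sym2.map (List.take s) s((a :: v0).take r, (b :: w0).take r) =
                s((a :: v0).take s, (b :: w0).take s) := by
              rw [Sym2.map_pair_eq, List.take_take, List.take_take,
                min_eq_left (le_of_lt hrs)]
            rw [hq]
            have c1 : ¬ (r ≤ s) := by omega
            by_cases h2 : (a :: v0).take s = (b :: w0).take s
            · rw [if_pos h2, List.drop_take, List.drop_take, show s - r = 0 by omega]
              simp only [List.take_zero]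
              rw [eta_nil_left, if_neg c1, if_pos hs, if_pos (Sym2.mk_isDiag_iff.mpr h2)]
              rfl
            · rw [if_neg h2, if_neg c1, if_pos hs,
                if_neg (by rw [Sym2.mk_isDiag_iff]; exact h2)]

lemma take_zip {A B : Type*} (l : List A) (l' : List B) (n : ℕ) :
    (l.zip l').take n = (l.take n).zip (l'.take n) := by
  unfold List.zip
  exact List.take_zipWith

lemma drop_zip {A B : Type*} (l : List A) (l' : List B) (n : ℕ) :
    (l.zip l').drop n = (l.drop n).zip (l'.drop n) := by
  unfold List.zip
  exact List.drop_zipWith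

lemma alphaD_def (rd α : ℕ) : alphaD rd α = rd * ((α - 1) / rd) := rfl

lemma dvd_alphaD (rd α : ℕ) : rd ∣ alphaD rd α := Dvd.intro _ rfl

lemma alphaD_spec {rd α : ℕ} (hα : 1 ≤ α) (hrd : 1 ≤ rd) :
    alphaD rd α < α ∧ α ≤ alphaD rd α + rd := by
  have h1 := Nat.div_add_mod (α - 1) rd
  have h2 : (α - 1) % rd < rd := Nat.mod_lt _ (by omega)
  rw [alphaD_def]
  omega

/-- The key computation: `ξ_e` on prefixes of length `k` is determined by `ξ_e` on the
full vectors. -/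
lemma xi_take (r : ℕ → ℕ) (e : ℕ) (hR : 1 ≤ r (e + 1)) (hre : 1 ≤ r e)
    (v w : List Bool) (hlen : v.length = w.length) (k : ℕ) (hk : k < v.length) :
    xi r e (v.take k) (w.take k) =
      (xi r e v w).take (k / r (e + 1)) ++
        (if k % r (e + 1) = 0 then [] else
          [truncEta (r e) (k % r (e + 1)) ((xi r e v w).getD (k / r (e + 1)) none)]) := by
  unfold xi blocksOf
  simp only [toChunks_eq_chunks hR]
  set R := r (e + 1) with hRdef
  set q := k / R with hqdef
  set s := k % R with hsdef
  have hqs : R * q + s = k := Nat.div_add_mod k R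
  have hsR : s < R := Nat.mod_lt _ (by omega)
  have hqk : R * q ≤ k := by omega
  have hsplitv : v.take k = v.take (R * q) ++ (v.drop (R * q)).take s := by
    conv_lhs => rw [← List.take_append_drop (R * q) (v.take k)]
    rw [List.take_take, min_eq_left hqk, List.drop_take]
    congr 2
    omega
  have hsplitw : w.take k = w.take (R * q) ++ (w.drop (R * q)).take s := by
    conv_lhs => rw [← List.take_append_drop (R * q) (w.take k)]
    rw [List.take_take, min_eq_left hqk, List.drop_take]
    congr 2
    omega
  have hlenv : (v.take (R * q)).length = R * q := by
    rw [List.length_take]; omega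
  have hlenw : (w.take (R * q)).length = R * q := by
    rw [List.length_take]; omega
  rw [hsplitv, hsplitw, chunks_append hR q _ _ hlenv, chunks_append hR q _ _ hlenw,
    chunks_take hR, chunks_take hR]
  have hceq : ((chunks R v).take q).length = ((chunks R w).take q).length := by
    rw [List.length_take, List.length_take, chunks_length_eq R v.length v w rfl hlen.symm]
  rw [List.zip_append hceq, List.map_append, ← take_zip, List.map_take]
  congr 1
  rcases Nat.eq_zero_or_pos s with hs0 | hs0
  · rw [hs0]
    simp
  · rw [if_neg (by omega)]
    have hdvlen : (v.drop (R * q)).length = v.length - R * q := by simp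
    have hdwlen : (w.drop (R * q)).length = w.length - R * q := by simp
    have hcv : chunks R ((v.drop (R * q)).take s) = [(v.drop (R * q)).take s] := by
      apply chunks_singleton
      · have : ((v.drop (R * q)).take s).length = s := by
          rw [List.length_take]; omega
        intro hc
        rw [hc] at this
        simp at this
        omega
      · rw [List.length_take]; omega
    have hcw : chunks R ((w.drop (R * q)).take s) = [(w.drop (R * q)).take s] := by
      apply chunks_singleton
      · have : ((w.drop (R * q)).take s).length = s := by
          rw [List.length_take]; omega
        intro hc
        rw [hc] at this
        simp at this
        omega
      · rw [List.length_take]; omega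
    rw [hcv, hcw, List.zip_cons_cons, List.zip_nil_right, List.map_cons, List.map_nil]
    congr 1
    -- compute the getD term
    have hvne : v.drop (R * q) ≠ [] :=
      List.ne_nil_of_length_pos (by rw [List.length_drop]; omega)
    have hwne : w.drop (R * q) ≠ [] :=
      List.ne_nil_of_length_pos (by rw [List.length_drop]; omega)
    have hdz : ((chunks R v).zip (chunks R w)).drop q =
        (((v.drop (R * q)).take R) :: chunks R ((v.drop (R * q)).drop R)).zip
          (((w.drop (R * q)).take R) :: chunks R ((w.drop (R * q)).drop R)) := by
      rw [drop_zip, ← chunks_drop hR, ← chunks_drop hR,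
        chunks_eq_cons hR hvne, chunks_eq_cons hR hwne]
    have hgd : (List.map (fun (p : List Bool × List Bool) => eta (r e) p.1 p.2)
        (((chunks R v)).zip (chunks R w))).getD q none =
        eta (r e) ((v.drop (R * q)).take R) ((w.drop (R * q)).take R) := by
      rw [List.getD_eq_getElem?_getD, List.getElem?_map, ← List.head?_drop, hdz,
        List.zip_cons_cons, List.head?_cons]
      rfl
    rw [hgd, ← eta_take hre ((v.drop (R * q)).take R).length _ _ rfl
      (by rw [List.length_take, List.length_take]; omega) s]
    rw [List.take_take, List.take_take, min_eq_left (le_of_lt hsR)]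

lemma getD_xiList (r : ℕ → ℕ) (p j : ℕ) (hj : j < p + 1) (v w : List Bool) :
    (List.map (fun j => xi r (p - j) v w) (List.range (p + 1))).getD j [] = xi r (p - j) v w := by
  rw [List.getD_eq_getElem _ _ (by simpa using hj), List.getElem_map, List.getElem_range]

lemma getD_cColor (r : ℕ → ℕ) (p j : ℕ) (hj : j < p + 1) (v w : List Bool) :
    (cColor r p v w).getD j [] = xi r (p - j) v w := by
  unfold cColor
  exact getD_xiList r p j hj v w

/-- The function recovering `γ_d(v,w)` from `c_p(v,w)`. -/
def phi (r : ℕ → ℕ) (p d α : ℕ) (X : EGColor) : EGColor × Option (ℕ × Sym2 (List Bool)) :=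
  ((List.range (p + 1)).map fun j =>
      (X.getD j []).take (alphaD (r d) α / r (p - j + 1)) ++
        (if alphaD (r d) α % r (p - j + 1) = 0 then [] else
          [truncEta (r (p - j)) (alphaD (r d) α % r (p - j + 1))
            ((X.getD j []).getD (alphaD (r d) α / r (p - j + 1)) none)]),
   ((X.getD (p + 1 - d) []).getLast?).join)

lemma key (d p α : ℕ) (hd : 1 ≤ d) (hdp : d ≤ p + 1) (hα : 1 ≤ α)
    (r : ℕ → ℕ) (hrpos : ∀ e ≤ p + 1, 0 < r e)
    (v w : List Bool) (hv : v.length = α) (hw : w.length = α) :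
    (cColor r p (v.take (alphaD (r d) α)) (w.take (alphaD (r d) α)),
      eta (r (d - 1)) (v.drop (alphaD (r d) α)) (w.drop (alphaD (r d) α))) =
    phi r p d α (cColor r p v w) := by
  have hrd : 1 ≤ r d := hrpos d hdp
  obtain ⟨hlt, hle⟩ := alphaD_spec hα hrd
  rw [phi, Prod.mk.injEq]
  constructor
  · unfold cColor
    apply List.map_congr_left
    intro j hj
    rw [List.mem_range] at hj
    rw [getD_xiList r p j hj]
    exact xi_take r (p - j) (hrpos _ (by omega)) (hrpos _ (by omega)) v w
      (hv.trans hw.symm) _ (by omega)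
  · have hsplit : xi r (d - 1) v w =
        xi r (d - 1) (v.take (alphaD (r d) α)) (w.take (alphaD (r d) α)) ++
          [eta (r (d - 1)) (v.drop (alphaD (r d) α)) (w.drop (alphaD (r d) α))] := by
      unfold xi blocksOf
      rw [show d - 1 + 1 = d by omega]
      simp only [toChunks_eq_chunks hrd]
      have hv1 : chunks (r d) v =
          chunks (r d) (v.take (alphaD (r d) α)) ++ chunks (r d) (v.drop (alphaD (r d) α)) := by
        conv_lhs => rw [← List.take_append_drop (alphaD (r d) α) v]
        exact chunks_append hrd ((α - 1) / r d) _ _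
          (by rw [List.length_take, alphaD_def]; rw [alphaD_def] at hlt; omega)
      have hw1 : chunks (r d) w =
          chunks (r d) (w.take (alphaD (r d) α)) ++ chunks (r d) (w.drop (alphaD (r d) α)) := by
        conv_lhs => rw [← List.take_append_drop (alphaD (r d) α) w]
        exact chunks_append hrd ((α - 1) / r d) _ _
          (by rw [List.length_take, alphaD_def]; rw [alphaD_def] at hlt; omega)
      have hv2 : chunks (r d) (v.drop (alphaD (r d) α)) = [v.drop (alphaD (r d) α)] := by
        apply chunks_singleton
        · intro hc
          have := congrArg List.length hc
          simp at this
          omega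
        · rw [List.length_drop]; omega
      have hw2 : chunks (r d) (w.drop (alphaD (r d) α)) = [w.drop (alphaD (r d) α)] := by
        apply chunks_singleton
        · intro hc
          have := congrArg List.length hc
          simp at this
          omega
        · rw [List.length_drop]; omega
      have hceq : (chunks (r d) (v.take (alphaD (r d) α))).length =
          (chunks (r d) (w.take (alphaD (r d) α))).length :=
        chunks_length_eq _ (v.take (alphaD (r d) α)).length _ _ rfl
          (by rw [List.length_take, List.length_take, hv, hw])
      rw [hv1, hw1, hv2, hw2, List.zip_append hceq, List.map_append,
        List.zip_cons_cons, List.zip_nil_right, List.map_cons, List.map_nil]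
    rw [getD_cColor r p (p + 1 - d) (by omega), show p - (p + 1 - d) = d - 1 by omega,
      hsplit, List.getLast?_concat]
    rfl

end CFLSAux

/-- **Lemma 4.3.** Let `1 ≤ d ≤ p+1` and let `α' = alphaD (r d) α` be the largest
multiple of `r d` strictly less than `α`. Then `c_p` refines the function
`γ_d(v, w) = (c_p(v', w'), η_{d−1}(v'', w''))`, where `v = (v', v'')` and `w = (w', w'')`
are split at position `α'`. -/
theorem stmt8 (d p α : ℕ) (hd : 1 ≤ d) (hdp : d ≤ p + 1) (hα : 1 ≤ α)
    (r : ℕ → ℕ) (hr0 : r 0 = 1)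
    (hrpos : ∀ e ≤ p + 1, 0 < r e) (hrdvd : ∀ e < p + 1, r e ∣ r (e + 1))
    (v w x y : List Bool) (hv : v.length = α) (hw : w.length = α)
    (hx : x.length = α) (hy : y.length = α)
    (h : cColor r p v w = cColor r p x y) :
    (cColor r p (v.take (alphaD (r d) α)) (w.take (alphaD (r d) α)),
      eta (r (d - 1)) (v.drop (alphaD (r d) α)) (w.drop (alphaD (r d) α))) =
    (cColor r p (x.take (alphaD (r d) α)) (y.take (alphaD (r d) α)),
      eta (r (d - 1)) (x.drop (alphaD (r d) α)) (y.drop (alphaD (r d) α))) := by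
  rw [CFLSAux.key d p α hd hdp hα r hrpos v w hv hw,
    CFLSAux.key d p α hd hdp hα r hrpos x y hx hy, h]
end

section
/- Let p ≥ 2 and α be positive integers, fix parameters r_0 = 1, r_1, …, r_{p+1} with r_{e−1} dividing r_e for each e, and let S ⊆ {0,1}^α be a finite set. For every d with 2 ≤ d ≤ p there exists an injective map ι : C_E^{(d−1)} → C_E^{(d)} such that every {x,y} ∈ C_E^{(d−1)} is mapped to ι({x,y}) = {(v,x), (v,y)} for some vector v ∈ {0,1}^{α_{d−1} − α_d} depending on {x,y}; moreover h_{d−1}(ι({x,y})) = {x,y}, i.e. h_{d−1} ∘ ι is the identity map on C_E^{(d−1)}. In particular |C_E^{(d−1)}| ≤ |C_E^{(d)}|. -/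
-- chunk machinery
section Chunks
variable {β : Type*}

def chunkCont (n : ℕ) : List β → List β → List (List β)
  | a, [] => [a]
  | a, x :: xs => if a.length = n then a :: chunkCont n [x] xs else chunkCont n (a ++ [x]) xs

theorem toChunks_go_eq (n : ℕ) (l : List β) (acc₁ : Array β) (acc₂ : Array (List β)) :
    List.toChunks.go n l acc₁ acc₂ = acc₂.toList ++ chunkCont n acc₁.toList l := by
  induction l generalizing acc₁ acc₂ with
  | nil => simp [List.toChunks.go, chunkCont]
  | cons x xs ih =>
    rw [List.toChunks.go]
    have hsz : acc₁.size = acc₁.toList.length := (Array.length_toList).symm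
    by_cases h : acc₁.toList.length = n
    · rw [if_pos (by rw [hsz]; simpa using h), ih, chunkCont]
      simp [Array.toList_push, h]
    · rw [if_neg (by rw [hsz]; simpa using h), ih, chunkCont]
      simp [Array.toList_push, h, (by rw [hsz]; exact h : ¬ acc₁.size = n)]

theorem toChunks_cons (n : ℕ) (x : β) (xs : List β) (hn : n ≠ 0) :
    (x :: xs).toChunks n = chunkCont n [x] xs := by
  obtain ⟨m, rfl⟩ := Nat.exists_eq_succ_of_ne_zero hn
  rw [List.toChunks, toChunks_go_eq] <;> simp

theorem chunkCont_eq (n : ℕ) (hn : 0 < n) (l a : List β) (ha : a ≠ []) (hal : a.length ≤ n) :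
    chunkCont n a l = (a ++ l).take n :: ((a ++ l).drop n).toChunks n := by
  induction l generalizing a with
  | nil =>
    rw [chunkCont]
    simp [List.take_of_length_le hal, List.drop_eq_nil_of_le hal, List.toChunks]
  | cons x xs ih =>
    rw [chunkCont]
    by_cases h : a.length = n
    · rw [if_pos h, List.take_append_of_le_length h.ge,
        List.drop_append_of_le_length h.ge, List.take_of_length_le h.le,
        List.drop_eq_nil_of_le h.le, List.nil_append, toChunks_cons n x xs hn.ne']
    · rw [if_neg h, ih (a ++ [x]) (by simp) (by simp; omega)]
      simp

theorem toChunks_eq (n : ℕ) (hn : 0 < n) (l : List β) (hl : l ≠ []) :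
    l.toChunks n = l.take n :: (l.drop n).toChunks n := by
  obtain ⟨x, xs, rfl⟩ := List.exists_cons_of_ne_nil hl
  rw [toChunks_cons n x xs hn.ne', chunkCont_eq n hn xs [x] (by simp) (by simp; omega)]
  simp

end Chunks

theorem toChunks_singleton (n : ℕ) (hn : 0 < n) (l : List Bool) (h0 : l ≠ []) (h1 : l.length ≤ n) :
    l.toChunks n = [l] := by
  rw [toChunks_eq n hn l h0, List.take_of_length_le h1, List.drop_eq_nil_of_le h1]
  simp [List.toChunks]

theorem find_aux (r : ℕ) (hr : 0 < r) (x y : List Bool) (hx0 : x ≠ []) (hxr : x.length ≤ r)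
    (hxy : y.length = x.length) (hne : x ≠ y) :
    ∀ (t : ℕ) (n : ℕ) (m : List Bool), m.length = r * t →
    (((((m ++ x).toChunks r).zip ((m ++ y).toChunks r)).zipIdx n).map Prod.swap).find?
      (fun q => q.2.1 != q.2.2) = some (n + t, (x, y)) := by
  intro t
  induction t with
  | zero =>
    intro n m hm
    rw [List.length_eq_zero_iff.mp (by omega : m.length = 0)]
    simp only [List.nil_append]
    rw [toChunks_singleton r hr x hx0 hxr,
      toChunks_singleton r hr y (by rw [← List.length_pos_iff] at hx0 ⊢; omega) (by omega)]
    have hb : (x != y) = true := bne_iff_ne.mpr hne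
    simp [List.find?, hb]
  | succ t ih =>
    intro n m hm
    have hm0 : m ≠ [] := by rw [← List.length_pos_iff]; nlinarith
    have hrm : r ≤ m.length := by nlinarith
    rw [toChunks_eq r hr (m ++ x) (by simp [hm0]), toChunks_eq r hr (m ++ y) (by simp [hm0]),
      List.take_append_of_le_length hrm, List.take_append_of_le_length hrm,
      List.drop_append_of_le_length hrm, List.drop_append_of_le_length hrm,
      List.zip_cons_cons, List.zipIdx_cons, List.map_cons, Prod.swap_prod_mk, List.find?_cons]
    have : ((m.take r, m.take r).1 != (m.take r, m.take r).2) = false := by simp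
    rw [this]
    rw [ih (n + 1) (m.drop r) (by rw [List.length_drop, hm, Nat.mul_succ]; omega)]
    have h2 : n + 1 + t = n + (t + 1) := by omega
    rw [h2]

theorem eta_append (r : ℕ) (hr : 0 < r) (m x y : List Bool) (hm : r ∣ m.length)
    (hx0 : x ≠ []) (hxr : x.length ≤ r) (hxy : y.length = x.length) (hne : x ≠ y) :
    ∃ i : ℕ, eta r (m ++ x) (m ++ y) = some (i, s(x, y)) := by
  obtain ⟨t, ht⟩ := hm
  refine ⟨t, ?_⟩
  unfold eta blocksOf
  rw [show ∀ l : List (List Bool × List Bool), l.zipIdx = l.zipIdx 0 from fun _ => rfl,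
    find_aux r hr x y hx0 hxr hxy hne t 0 m ht]
  simp

-- membership characterization
theorem mem_CEset {r : ℕ → ℕ} {α : ℕ} {S : Finset (List Bool)} {d : ℕ} {s : Sym2 (List Bool)} :
    s ∈ CEset r α S d ↔ ∃ v w : List Bool, v ∈ S ∧ w ∈ S ∧
      v.take (alphaD (r d) α) = w.take (alphaD (r d) α) ∧
      v.drop (alphaD (r d) α) ≠ w.drop (alphaD (r d) α) ∧
      s(v.drop (alphaD (r d) α), w.drop (alphaD (r d) α)) = s := by
  simp only [CEset, Finset.mem_image, Finset.mem_filter, Finset.mem_product]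
  constructor
  · rintro ⟨⟨v, w⟩, ⟨⟨hv, hw⟩, h1, h2⟩, h3⟩
    exact ⟨v, w, hv, hw, h1, h2, h3⟩
  · rintro ⟨v, w, hv, hw, h1, h2, h3⟩
    exact ⟨⟨v, w⟩, ⟨⟨hv, hw⟩, h1, h2⟩, h3⟩

open Classical in
/-- Chosen middle segment for a pair in `C_E^{(d-1)}`. -/
noncomputable def midvec (S : Finset (List Bool)) (k1 k2 : ℕ) (s : Sym2 (List Bool)) :
    List Bool :=
  if h : ∃ v w : List Bool, v ∈ S ∧ w ∈ S ∧ v.take k1 = w.take k1 ∧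
      v.drop k1 ≠ w.drop k1 ∧ s(v.drop k1, w.drop k1) = s
  then (h.choose.take k1).drop k2 else []

theorem midvec_spec (S : Finset (List Bool)) (k1 k2 : ℕ) (s : Sym2 (List Bool))
    (h : ∃ v w : List Bool, v ∈ S ∧ w ∈ S ∧ v.take k1 = w.take k1 ∧
      v.drop k1 ≠ w.drop k1 ∧ s(v.drop k1, w.drop k1) = s) :
    ∃ v w : List Bool, v ∈ S ∧ w ∈ S ∧ v.take k1 = w.take k1 ∧
      v.drop k1 ≠ w.drop k1 ∧ s(v.drop k1, w.drop k1) = s ∧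
      midvec S k1 k2 s = (v.take k1).drop k2 := by
  obtain ⟨w, hw⟩ := h.choose_spec
  exact ⟨h.choose, w, hw.1, hw.2.1, hw.2.2.1, hw.2.2.2.1, hw.2.2.2.2,
    by unfold midvec; rw [dif_pos h]⟩


/-- **Claim 5.2.** For `2 ≤ d ≤ p` there is an injective map
`ι : C_E^{(d−1)} → C_E^{(d)}` sending each `{x, y} ∈ C_E^{(d−1)}` to a pair of the form
`{(v, x), (v, y)}` with `v ∈ {0,1}^{α_{d−1} − α_d}`, such that
`h_{d−1}(ι({x, y})) = {x, y}` (here `h_{d−1}` is the unordered pair of the first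
differing blocks of resolution `d−1`, i.e. the second component of `η_{d−1}`).
In particular `|C_E^{(d−1)}| ≤ |C_E^{(d)}|`. -/
theorem stmt9 (p α : ℕ) (hp : 2 ≤ p) (hα : 1 ≤ α) (r : ℕ → ℕ) (hr0 : r 0 = 1)
    (hrpos : ∀ e ≤ p + 1, 0 < r e) (hrdvd : ∀ e < p + 1, r e ∣ r (e + 1))
    (S : Finset (List Bool)) (hS : ∀ v ∈ S, v.length = α)
    (d : ℕ) (hd : 2 ≤ d) (hdp : d ≤ p) :
    ∃ ι : Sym2 (List Bool) → Sym2 (List Bool),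
      Set.InjOn ι (CEset r α S (d - 1)) ∧
      (∀ c ∈ CEset r α S (d - 1), ι c ∈ CEset r α S d) ∧
      (∀ x y : List Bool, s(x, y) ∈ CEset r α S (d - 1) →
        ∃ v : List Bool, v.length = alphaD (r (d - 1)) α - alphaD (r d) α ∧
          ι s(x, y) = s(v ++ x, v ++ y) ∧
          (eta (r (d - 1)) (v ++ x) (v ++ y)).map Prod.snd = some s(x, y)) ∧
      (CEset r α S (d - 1)).card ≤ (CEset r α S d).card := by
  classical
  have hrrpos : 0 < r (d - 1) := hrpos _ (by omega)
  have hrdpos : 0 < r d := hrpos _ (by omega)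
  have hdd : r (d - 1) ∣ r d := by
    have h := hrdvd (d - 1) (by omega)
    rwa [show d - 1 + 1 = d by omega] at h
  set k1 := alphaD (r (d - 1)) α with hk1def
  set k2 := alphaD (r d) α with hk2def
  have hk1e : k1 = r (d - 1) * ((α - 1) / r (d - 1)) := rfl
  have hk2e : k2 = r d * ((α - 1) / r d) := rfl
  have hk1lt : k1 < α := by
    have h : r (d - 1) * ((α - 1) / r (d - 1)) ≤ α - 1 := by
      rw [mul_comm]; exact Nat.div_mul_le_self _ _
    omega
  have hk2lt : k2 < α := by
    have h : r d * ((α - 1) / r d) ≤ α - 1 := by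
      rw [mul_comm]; exact Nat.div_mul_le_self _ _
    omega
  have hdvdk1 : r (d - 1) ∣ k1 := ⟨_, hk1e⟩
  have hdvdk2 : r (d - 1) ∣ k2 := by
    rw [hk2e]; exact Dvd.dvd.mul_right hdd _
  have hk21 : k2 ≤ k1 := by
    obtain ⟨c, hc⟩ := hdvdk2
    have h1 : c ≤ (α - 1) / r (d - 1) := by
      rw [Nat.le_div_iff_mul_le hrrpos]
      have hcc : c * r (d - 1) = r (d - 1) * c := Nat.mul_comm _ _
      omega
    rw [hk1e, hc]
    exact Nat.mul_le_mul_left _ h1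
  have hαk1 : α - k1 ≤ r (d - 1) := by
    have h1 := Nat.div_add_mod (α - 1) (r (d - 1))
    have h2 : (α - 1) % r (d - 1) < r (d - 1) := Nat.mod_lt _ hrrpos
    omega
  have hdvdsub : r (d - 1) ∣ k1 - k2 := Nat.dvd_sub hdvdk1 hdvdk2
  have hsplit : ∀ u : List Bool, u.length = α → u.drop k2 = (u.take k1).drop k2 ++ u.drop k1 := by
    intro u hu
    conv_lhs => rw [← List.take_append_drop k1 u]
    rw [List.drop_append, List.length_take, hu,
      show k2 - min k1 α = 0 by omega, List.drop_zero]
  -- key lemma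
  have key : ∀ x y : List Bool, s(x, y) ∈ CEset r α S (d - 1) →
      (midvec S k1 k2 s(x, y)).length = k1 - k2 ∧
      s(midvec S k1 k2 s(x, y) ++ x, midvec S k1 k2 s(x, y) ++ y) ∈ CEset r α S d ∧
      (eta (r (d - 1)) (midvec S k1 k2 s(x, y) ++ x)
        (midvec S k1 k2 s(x, y) ++ y)).map Prod.snd = some s(x, y) := by
    intro x y hmem
    have hmem' := mem_CEset.mp hmem
    rw [← hk1def] at hmem'
    obtain ⟨v, w, hvS, hwS, htk, hdk, hsym, hmid⟩ := midvec_spec S k1 k2 s(x, y) hmem'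
    have hvα : v.length = α := hS v hvS
    have hwα : w.length = α := hS w hwS
    set mid := midvec S k1 k2 s(x, y) with hmiddef
    have hmidlen : mid.length = k1 - k2 := by
      rw [hmid, List.length_drop, List.length_take, hvα]
      omega
    have hvw : (w.take k1).drop k2 = mid := by rw [hmid, htk]
    have hvsp : v.drop k2 = mid ++ v.drop k1 := by rw [hsplit v hvα, ← hmid]
    have hwsp : w.drop k2 = mid ++ w.drop k1 := by rw [hsplit w hwα, ← hvw]
    have hxylen : x.length = α - k1 ∧ y.length = α - k1 ∧ x ≠ y ∧
        s(mid ++ x, mid ++ y) = s(v.drop k2, w.drop k2) := by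
      rcases Sym2.eq_iff.mp hsym with ⟨h1, h2⟩ | ⟨h1, h2⟩
      · refine ⟨by rw [← h1, List.length_drop, hvα], by rw [← h2, List.length_drop, hwα],
          by rw [← h1, ← h2]; exact hdk, ?_⟩
        rw [hvsp, hwsp, h1, h2]
      · refine ⟨by rw [← h2, List.length_drop, hwα], by rw [← h1, List.length_drop, hvα],
          by rw [← h1, ← h2]; exact fun hh => hdk hh.symm, ?_⟩
        rw [hvsp, hwsp, h2, h1, Sym2.eq_swap]
    obtain ⟨hxl, hyl, hxy, hpair⟩ := hxylen
    refine ⟨hmidlen, ?_, ?_⟩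
    · rw [hpair]
      have hmem2 : ∃ v' w' : List Bool, v' ∈ S ∧ w' ∈ S ∧
          v'.take k2 = w'.take k2 ∧ v'.drop k2 ≠ w'.drop k2 ∧
          s(v'.drop k2, w'.drop k2) = s(v.drop k2, w.drop k2) := by
        refine ⟨v, w, hvS, hwS, ?_, ?_, rfl⟩
        · have := congrArg (List.take k2) htk
          rwa [List.take_take, List.take_take, min_eq_left hk21] at this
        · rw [hvsp, hwsp]
          exact fun hh => hdk (List.append_cancel_left hh)
      rw [mem_CEset, ← hk2def]
      exact hmem2
    · have hx0 : x ≠ [] := by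
        rw [← List.length_pos_iff, hxl]; omega
      obtain ⟨i, hi⟩ := eta_append (r (d - 1)) hrrpos mid x y
        (by rw [hmidlen]; exact hdvdsub) hx0 (by omega) (by omega) hxy
      rw [hi]
      rfl
  -- the three main properties
  have hmaps : ∀ c ∈ CEset r α S (d - 1),
      Sym2.map (fun z => midvec S k1 k2 c ++ z) c ∈ CEset r α S d := by
    intro c hc
    induction c using Sym2.ind with
    | _ x y =>
      rw [Sym2.map_pair_eq]
      exact (key x y hc).2.1
  have hinv : ∀ c ∈ CEset r α S (d - 1),
      Sym2.map (List.drop (k1 - k2)) (Sym2.map (fun z => midvec S k1 k2 c ++ z) c) = c := by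
    intro c hc
    induction c using Sym2.ind with
    | _ x y =>
      rw [Sym2.map_pair_eq, Sym2.map_pair_eq, ← (key x y hc).1, List.drop_left, List.drop_left]
  have hinj : Set.InjOn (fun c => Sym2.map (fun z => midvec S k1 k2 c ++ z) c)
      (CEset r α S (d - 1)) := by
    intro s1 hs1 s2 hs2 heq
    have h1 := hinv s1 (Finset.mem_coe.mp hs1)
    have h2 := hinv s2 (Finset.mem_coe.mp hs2)
    simp only at heq
    rw [← h1, ← h2, heq]
  refine ⟨fun c => Sym2.map (fun z => midvec S k1 k2 c ++ z) c, hinj, hmaps, ?_,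
    Finset.card_le_card_of_injOn _ hmaps hinj⟩
  intro x y hxy
  exact ⟨midvec S k1 k2 s(x, y), (key x y hxy).1, Sym2.map_pair_eq _ x y, (key x y hxy).2.2⟩
end
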